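/- Halving property of the fault-tolerant midpoint under bounded measurement error: let n, f be natural numbers with n > 3f, let d ≥ 0, let x, y : Fin n → ℝ, and let G ⊆ Fin n have complement of cardinality at most f. If |x i − y i| ≤ d for every i ∈ G, then |mid_f(x) − mid_f(y)| ≤ (max_{i∈G} x i − min_{i∈G} x i)/2 + d, where mid_f(z) = (z_(f+1) + z_(n−f))/2. (This quantifies the per-round error term 'd' appearing in the bound |I_{k+1}| ≤ |I_k|/2 + d + ρϑ⁻¹T of Lemma 3 of the paper, where the nonfaulty nodes' observations of each other's pulses differ by at most the message-delay bound d.) -/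

import Mathlib

open Finset

/-- The `k`-th smallest entry (1-indexed, counted with multiplicity) of `x : Fin n → ℝ`. -/
noncomputable def orderStat {n : ℕ} (x : Fin n → ℝ) (k : ℕ) : ℝ :=
  ((Multiset.map x (Finset.univ : Finset (Fin n)).val).sort (· ≤ ·)).getD (k - 1) 0

/-- The `k`-th smallest (1-indexed, with multiplicity) of the `|G|` values `x i`, `i ∈ G`. -/
noncomputable def orderStatOn {n : ℕ} (G : Finset (Fin n)) (x : Fin n → ℝ) (k : ℕ) : ℝ :=
  ((Multiset.map x G.val).sort (· ≤ ·)).getD (k - 1) 0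

/-- The fault-tolerant midpoint `mid_f(x) = (x_(f+1) + x_(n−f))/2`. -/
noncomputable def ftMid (n f : ℕ) (x : Fin n → ℝ) : ℝ :=
  (orderStat x (f + 1) + orderStat x (n - f)) / 2

/-- If the complement of `G` has at most `f` elements and `n > 3f`, then `G` is nonempty. -/
lemma nonempty_of_compl {n f : ℕ} (hn : 3 * f < n) {G : Finset (Fin n)}
    (hG : Gᶜ.card ≤ f) : G.Nonempty := by
  rw [← Finset.card_pos]
  have h := Finset.card_compl G
  simp only [Fintype.card_fin] at h
  omega

lemma sorted_rel {l : List ℝ} (hl : l.Pairwise (· ≤ ·)) {i j : ℕ} (hij : i ≤ j) (hj : j < l.length) :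
    l[i]'(lt_of_le_of_lt hij hj) ≤ l[j] := by
  rcases eq_or_lt_of_le hij with rfl | h
  · exact le_refl _
  · exact List.pairwise_iff_getElem.mp hl i j _ hj h

lemma countP_le_of_sorted (l : List ℝ) (hl : l.Pairwise (· ≤ ·)) (k : ℕ) (hk : k < l.length) :
    k + 1 ≤ l.countP (fun a => decide (a ≤ l.getD k 0)) := by
  have h1 := (List.countP_append (p := fun a => decide (a ≤ l.getD k 0)) (l₁ := l.take (k+1)) (l₂ := l.drop (k+1))).symm
  rw [List.take_append_drop] at h1
  have h2 : (l.take (k+1)).countP (fun a => decide (a ≤ l.getD k 0)) = (l.take (k+1)).length := by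
    rw [List.countP_eq_length]
    intro a ha
    rw [List.mem_iff_getElem] at ha
    obtain ⟨i, hi, rfl⟩ := ha
    have hi' : i < k + 1 := by
      have := hi; rw [List.length_take] at this; omega
    rw [List.getElem_take, List.getD_eq_getElem l 0 hk]
    simpa using sorted_rel hl (by omega : i ≤ k) hk
  rw [List.length_take] at h2
  omega

lemma countP_ge_of_sorted (l : List ℝ) (hl : l.Pairwise (· ≤ ·)) (k : ℕ) (hk : k < l.length) :
    l.length - k ≤ l.countP (fun a => decide (l.getD k 0 ≤ a)) := by
  have h1 := (List.countP_append (p := fun a => decide (l.getD k 0 ≤ a)) (l₁ := l.take k) (l₂ := l.drop k)).symm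
  rw [List.take_append_drop] at h1
  have h2 : (l.drop k).countP (fun a => decide (l.getD k 0 ≤ a)) = (l.drop k).length := by
    rw [List.countP_eq_length]
    intro a ha
    rw [List.mem_iff_getElem] at ha
    obtain ⟨i, hi, rfl⟩ := ha
    have hi' : k + i < l.length := by
      have := hi; rw [List.length_drop] at this; omega
    rw [List.getElem_drop, List.getD_eq_getElem l 0 hk]
    simpa using sorted_rel hl (by omega : k ≤ k + i) hi'
  rw [List.length_drop] at h2
  omega

lemma countP_sort_eq {n : ℕ} (z : Fin n → ℝ) (p : ℝ → Prop) [DecidablePred p] :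
    ((Multiset.map z (univ : Finset (Fin n)).val).sort (· ≤ ·)).countP (fun a => decide (p a)) =
      (univ.filter (fun i => p (z i))).card := by
  rw [← Multiset.coe_countP, Multiset.sort_eq, Multiset.countP_map]
  rfl

lemma length_sort_eq {n : ℕ} (z : Fin n → ℝ) :
    ((Multiset.map z (univ : Finset (Fin n)).val).sort (· ≤ ·)).length = n := by
  rw [Multiset.length_sort, Multiset.card_map]
  simp

lemma count_le_orderStat {n k : ℕ} (z : Fin n → ℝ) (hk1 : 1 ≤ k) (hkn : k ≤ n) :
    k ≤ (univ.filter (fun i => z i ≤ orderStat z k)).card := by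
  have hlen := length_sort_eq z
  have h := countP_le_of_sorted ((Multiset.map z (univ : Finset (Fin n)).val).sort (· ≤ ·))
    (Multiset.pairwise_sort _ _) (k - 1) (by omega)
  rw [show ((Multiset.map z (univ : Finset (Fin n)).val).sort (· ≤ ·)).getD (k - 1) 0
      = orderStat z k from rfl] at h
  rw [countP_sort_eq z (fun a => a ≤ orderStat z k)] at h
  omega

lemma count_ge_orderStat {n k : ℕ} (z : Fin n → ℝ) (hk1 : 1 ≤ k) (hkn : k ≤ n) :
    n - k + 1 ≤ (univ.filter (fun i => orderStat z k ≤ z i)).card := by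
  have hlen := length_sort_eq z
  have h := countP_ge_of_sorted ((Multiset.map z (univ : Finset (Fin n)).val).sort (· ≤ ·))
    (Multiset.pairwise_sort _ _) (k - 1) (by omega)
  rw [show ((Multiset.map z (univ : Finset (Fin n)).val).sort (· ≤ ·)).getD (k - 1) 0
      = orderStat z k from rfl] at h
  rw [countP_sort_eq z (fun a => orderStat z k ≤ a)] at h
  rw [hlen] at h
  omega

lemma le_orderStat {n k : ℕ} (z : Fin n → ℝ) (c : ℝ) (hk1 : 1 ≤ k) (hkn : k ≤ n)
    (h : n - k + 1 ≤ (univ.filter (fun i => c ≤ z i)).card) : c ≤ orderStat z k := by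
  by_contra hc
  push_neg at hc
  have h1 := count_le_orderStat z hk1 hkn
  have h2 : (univ.filter (fun i => c ≤ z i)).card ≤
      (univ.filter (fun i => ¬ (z i ≤ orderStat z k))).card := by
    apply Finset.card_le_card
    intro i hi
    simp only [mem_filter, mem_univ, true_and] at *
    intro hle
    exact absurd (le_trans hi hle) (not_le.mpr hc)
  have h3 := Finset.card_filter_add_card_filter_not
    (s := (univ : Finset (Fin n))) (p := fun i => z i ≤ orderStat z k)
  simp only [Finset.card_univ, Fintype.card_fin] at h3
  omega

lemma orderStat_le {n k : ℕ} (z : Fin n → ℝ) (c : ℝ) (hk1 : 1 ≤ k) (hkn : k ≤ n)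
    (h : k ≤ (univ.filter (fun i => z i ≤ c)).card) : orderStat z k ≤ c := by
  by_contra hc
  push_neg at hc
  have h1 := count_ge_orderStat z hk1 hkn
  have h2 : (univ.filter (fun i => z i ≤ c)).card ≤
      (univ.filter (fun i => ¬ (orderStat z k ≤ z i))).card := by
    apply Finset.card_le_card
    intro i hi
    simp only [mem_filter, mem_univ, true_and] at *
    intro hle
    exact absurd (le_trans hle hi) (not_le.mpr hc)
  have h3 := Finset.card_filter_add_card_filter_not
    (s := (univ : Finset (Fin n))) (p := fun i => orderStat z k ≤ z i)
  simp only [Finset.card_univ, Fintype.card_fin] at h3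
  omega

/-- Halving property of the fault-tolerant midpoint under bounded measurement error `d`
on the nonfaulty entries. -/
theorem stmt_4 (n f : ℕ) (hn : 3 * f < n) (d : ℝ) (hd : 0 ≤ d)
    (x y : Fin n → ℝ) (G : Finset (Fin n)) (hG : Gᶜ.card ≤ f)
    (hxy : ∀ i ∈ G, |x i - y i| ≤ d) :
    |ftMid n f x - ftMid n f y| ≤
      (G.sup' (nonempty_of_compl hn hG) x - G.inf' (nonempty_of_compl hn hG) x) / 2 + d := by
  have hne := nonempty_of_compl hn hG
  set M := G.sup' hne x with hM
  set m := G.inf' hne x with hm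
  have hGcard : n - f ≤ G.card := by
    have h := Finset.card_compl G
    simp only [Fintype.card_fin] at h
    omega
  have hxyd : ∀ i ∈ G, x i - d ≤ y i ∧ y i ≤ x i + d := by
    intro i hi
    have := abs_le.mp (hxy i hi)
    constructor <;> linarith [this.1, this.2]
  -- A : m ≤ x_(f+1)
  have hA : m ≤ orderStat x (f + 1) := by
    apply le_orderStat x m (by omega) (by omega)
    calc n - (f+1) + 1 ≤ G.card := by omega
    _ ≤ _ := by
      apply Finset.card_le_card
      intro i hi
      simp only [mem_filter, mem_univ, true_and]
      exact Finset.inf'_le x hi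
  -- B : x_(n-f) ≤ M
  have hB : orderStat x (n - f) ≤ M := by
    apply orderStat_le x M (by omega) (by omega)
    calc n - f ≤ G.card := hGcard
    _ ≤ _ := by
      apply Finset.card_le_card
      intro i hi
      simp only [mem_filter, mem_univ, true_and]
      exact Finset.le_sup' x hi
  -- E : m - d ≤ y_(f+1)
  have hE : m - d ≤ orderStat y (f + 1) := by
    apply le_orderStat y (m - d) (by omega) (by omega)
    calc n - (f+1) + 1 ≤ G.card := by omega
    _ ≤ _ := by
      apply Finset.card_le_card
      intro i hi
      simp only [mem_filter, mem_univ, true_and]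
      have h1 := Finset.inf'_le x hi
      have h2 := (hxyd i hi).1
      linarith
  -- F : y_(n-f) ≤ M + d
  have hF : orderStat y (n - f) ≤ M + d := by
    apply orderStat_le y (M + d) (by omega) (by omega)
    calc n - f ≤ G.card := hGcard
    _ ≤ _ := by
      apply Finset.card_le_card
      intro i hi
      simp only [mem_filter, mem_univ, true_and]
      have h1 := Finset.le_sup' x hi
      have h2 := (hxyd i hi).2
      linarith
  -- helper: intersecting a big universal filter with G
  have hinter : ∀ p : Fin n → Prop, ∀ _ : DecidablePred p,
      (G.filter p).card + f ≥ (univ.filter p).card := fun p hp => by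
    have hsub : univ.filter p ⊆ (G.filter p) ∪ Gᶜ := by
      intro i hi
      simp only [mem_filter, mem_univ, true_and] at hi
      by_cases h : i ∈ G
      · exact Finset.mem_union_left _ (Finset.mem_filter.mpr ⟨h, hi⟩)
      · exact Finset.mem_union_right _ (Finset.mem_compl.mpr h)
    calc (univ.filter p).card ≤ ((G.filter p) ∪ Gᶜ).card := Finset.card_le_card hsub
    _ ≤ (G.filter p).card + Gᶜ.card := Finset.card_union_le _ _
    _ ≤ (G.filter p).card + f := by omega
  -- C : x_(f+1) - d ≤ y_(n-f)
  have hC : orderStat x (f + 1) - d ≤ orderStat y (n - f) := by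
    apply le_orderStat y _ (by omega) (by omega)
    have h1 := count_ge_orderStat x (k := f + 1) (by omega) (by omega)
    have h2 := hinter (fun i => orderStat x (f+1) ≤ x i) (by infer_instance)
    have h3 : (G.filter (fun i => orderStat x (f+1) ≤ x i)) ⊆
        univ.filter (fun i => orderStat x (f + 1) - d ≤ y i) := by
      intro i hi
      simp only [mem_filter, mem_univ, true_and] at *
      have := (hxyd i hi.1).1
      linarith [hi.2]
    have h4 := Finset.card_le_card h3
    omega
  -- D : y_(f+1) ≤ x_(n-f) + d
  have hD : orderStat y (f + 1) ≤ orderStat x (n - f) + d := by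
    apply orderStat_le y _ (by omega) (by omega)
    have h1 := count_le_orderStat x (k := n - f) (by omega) (by omega)
    have h2 := hinter (fun i => x i ≤ orderStat x (n-f)) (by infer_instance)
    have h3 : (G.filter (fun i => x i ≤ orderStat x (n-f))) ⊆
        univ.filter (fun i => y i ≤ orderStat x (n - f) + d) := by
      intro i hi
      simp only [mem_filter, mem_univ, true_and] at *
      have := (hxyd i hi.1).2
      linarith [hi.2]
    have h4 := Finset.card_le_card h3
    omega
  unfold ftMid
  rw [abs_le]
  constructor <;> [skip; skip] <;> linarith
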